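/- The optimal assignment value with a strong kernel is achieved by any greedy matching within equivalence classes: for the 0/1-valued strong base kernel k_b((u,v),(u',v')) = 1 iff the two edges have the same 'refined edge address', the maximum over all bijections β of Σ k_b(e, β(e)) (with dummy elements padded) equals Σ_ε min(|E_ε|, |E'_ε|), where E_ε, E'_ε are the sets of edges with address ε. -/

import Mathlib

open Finset

section Aux

lemma equiv_extend {X Y : Type*} [Fintype X] [Fintype Y] [DecidableEq X] [DecidableEq Y]
    (hc : Fintype.card X = Fintype.card Y) (s : Finset X) (f : X → Y)
    (hf : Set.InjOn f s) : ∃ e : X ≃ Y, ∀ x ∈ s, e x = f x := by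
  classical
  set t : Finset Y := s.image f with ht
  have hcard : t.card = s.card := Finset.card_image_of_injOn hf
  have hinj : Function.Injective (fun x : {x // x ∈ s} => (⟨f x.1, Finset.mem_image_of_mem f x.2⟩ : {y // y ∈ t})) := by
    rintro ⟨x, hx⟩ ⟨y, hy⟩ h
    simp only [Subtype.mk.injEq] at h
    exact Subtype.ext (hf hx hy h)
  have hc1 : Fintype.card {x // x ∈ s} = Fintype.card {y // y ∈ t} := by
    simp [Fintype.card_coe, hcard]
  have hbij := (Fintype.bijective_iff_injective_and_card _).2 ⟨hinj, hc1⟩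
  let e1 : {x // x ∈ s} ≃ {y // y ∈ t} := Equiv.ofBijective _ hbij
  have hc2 : Fintype.card {x // ¬ x ∈ s} = Fintype.card {y // ¬ y ∈ t} := by
    rw [Fintype.card_subtype_compl, Fintype.card_subtype_compl]
    simp [Fintype.card_coe, hcard, hc]
  let e2 : {x // ¬ x ∈ s} ≃ {y // ¬ y ∈ t} := Fintype.equivOfCardEq hc2
  refine ⟨(Equiv.sumCompl (· ∈ s)).symm.trans ((e1.sumCongr e2).trans (Equiv.sumCompl (· ∈ t))), ?_⟩
  intro x hx
  simp only [Equiv.trans_apply]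
  rw [Equiv.sumCompl_symm_apply_of_pos (p := (· ∈ s)) hx]
  simp [e1, Equiv.ofBijective]

variable {E A : Type*} [Fintype E] [DecidableEq E] [DecidableEq A]

/-- rank of `e` within its fiber under `a`, w.r.t. an injective labelling `o`. -/
def fiberIdx (o : E → ℕ) (a : E → A) (e : E) : ℕ :=
  ((univ.filter fun x => a x = a e).filter fun x => o x < o e).card

lemma fiberIdx_lt (o : E → ℕ) (a : E → A) (e : E) :
    fiberIdx o a e < (univ.filter fun x => a x = a e).card := by
  apply Finset.card_lt_card
  constructor
  · exact Finset.filter_subset _ _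
  · intro hsub
    have := hsub (Finset.mem_filter.2 ⟨Finset.mem_univ e, rfl⟩)
    simp at this

lemma fiberIdx_injOn {o : E → ℕ} (ho : Function.Injective o) (a : E → A)
    {e1 e2 : E} (ha : a e1 = a e2) (h : fiberIdx o a e1 = fiberIdx o a e2) : e1 = e2 := by
  rcases lt_trichotomy (o e1) (o e2) with hlt | heq | hlt
  · exfalso
    have hss : ((univ.filter fun x => a x = a e1).filter fun x => o x < o e1) ⊂
        ((univ.filter fun x => a x = a e2).filter fun x => o x < o e2) := by
      constructor
      · intro x hx
        simp only [Finset.mem_filter] at hx ⊢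
        exact ⟨⟨hx.1.1, hx.1.2.trans ha⟩, hx.2.trans hlt⟩
      · intro hsub
        have := hsub (Finset.mem_filter.2 ⟨Finset.mem_filter.2 ⟨Finset.mem_univ e1, ha⟩, hlt⟩)
        simp at this
    exact absurd h (Nat.ne_of_lt (Finset.card_lt_card hss))
  · exact ho heq
  · exfalso
    have hss : ((univ.filter fun x => a x = a e2).filter fun x => o x < o e2) ⊂
        ((univ.filter fun x => a x = a e1).filter fun x => o x < o e1) := by
      constructor
      · intro x hx
        simp only [Finset.mem_filter] at hx ⊢
        exact ⟨⟨hx.1.1, hx.1.2.trans ha.symm⟩, hx.2.trans hlt⟩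
      · intro hsub
        have := hsub (Finset.mem_filter.2 ⟨Finset.mem_filter.2 ⟨Finset.mem_univ e2, ha.symm⟩, hlt⟩)
        simp at this
    exact absurd h.symm (Nat.ne_of_lt (Finset.card_lt_card hss))

lemma fiberIdx_image {o : E → ℕ} (ho : Function.Injective o) (a : E → A) (ε : A) :
    (univ.filter fun e => a e = ε).image (fiberIdx o a)
      = Finset.range (univ.filter fun e => a e = ε).card := by
  have hinj : Set.InjOn (fiberIdx o a) ((univ.filter fun e => a e = ε) : Finset E) := by
    intro e1 h1 e2 h2 h
    simp only [Finset.coe_filter, Set.mem_setOf_eq] at h1 h2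
    exact fiberIdx_injOn ho a (h1.2.trans h2.2.symm) h
  apply Finset.eq_of_subset_of_card_le
  · intro i hi
    simp only [Finset.mem_image] at hi
    obtain ⟨e, he, rfl⟩ := hi
    simp only [Finset.mem_filter] at he
    have := fiberIdx_lt o a e
    rw [Finset.mem_range]
    calc fiberIdx o a e < (univ.filter fun x => a x = a e).card := this
      _ = _ := by rw [he.2]
  · rw [Finset.card_range, Finset.card_image_of_injOn hinj]

lemma fiberIdx_surj {o : E → ℕ} (ho : Function.Injective o) (a : E → A) (ε : A) {i : ℕ}
    (hi : i < (univ.filter fun e => a e = ε).card) :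
    ∃ e, a e = ε ∧ fiberIdx o a e = i := by
  have : i ∈ (univ.filter fun e => a e = ε).image (fiberIdx o a) := by
    rw [fiberIdx_image ho a ε]; exact Finset.mem_range.2 hi
  obtain ⟨e, he, hei⟩ := Finset.mem_image.1 this
  exact ⟨e, (Finset.mem_filter.1 he).2, hei⟩

lemma fiberIdx_filter_card {o : E → ℕ} (ho : Function.Injective o) (a : E → A) (ε : A) (k : ℕ)
    (hk : k ≤ (univ.filter fun e => a e = ε).card) :
    ((univ.filter fun e => a e = ε).filter fun e => fiberIdx o a e < k).card = k := by
  have hinj : Set.InjOn (fiberIdx o a)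
      (((univ.filter fun e => a e = ε).filter fun e => fiberIdx o a e < k) : Finset E) := by
    intro e1 h1 e2 h2 h
    rw [Finset.mem_coe, Finset.mem_filter, Finset.mem_filter] at h1 h2
    exact fiberIdx_injOn ho a (h1.1.2.trans h2.1.2.symm) h
  rw [← Finset.card_image_of_injOn hinj]
  have : ((univ.filter fun e => a e = ε).filter fun e => fiberIdx o a e < k).image (fiberIdx o a)
      = Finset.range k := by
    apply Finset.Subset.antisymm
    · intro i hi
      simp only [Finset.mem_image, Finset.mem_filter] at hi
      obtain ⟨e, ⟨_, he⟩, rfl⟩ := hi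
      exact Finset.mem_range.2 he
    · intro i hi
      rw [Finset.mem_range] at hi
      obtain ⟨e, he, hei⟩ := fiberIdx_surj ho a ε (lt_of_lt_of_le hi hk)
      refine Finset.mem_image.2 ⟨e, ?_, hei⟩
      simp only [Finset.mem_filter]
      exact ⟨⟨Finset.mem_univ e, he⟩, by rw [hei]; exact hi⟩
  rw [this, Finset.card_range]

end Aux

/-- The 0/1 base kernel on padded sets: 1 iff both arguments are genuine
elements with the same address, 0 on dummies. -/
def kbPad {E E' A D D' : Type*} [DecidableEq A]
    (a : E → A) (a' : E' → A) : E ⊕ D → E' ⊕ D' → ℕ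
  | Sum.inl e, Sum.inl e' => if a e = a' e' then 1 else 0
  | _, _ => 0

section UB

lemma kbPad_le_one {E E' A D D' : Type*} [DecidableEq A]
    (a : E → A) (a' : E' → A) (x : E ⊕ D) (y : E' ⊕ D') : kbPad a a' x y ≤ 1 := by
  cases x <;> cases y <;> simp [kbPad] <;> split_ifs <;> simp

lemma kbPad_eq_one {E E' A D D' : Type*} [DecidableEq A]
    {a : E → A} {a' : E' → A} {e : E} {y : E' ⊕ D'}
    (h : kbPad (D := D) a a' (Sum.inl e) y = 1) : ∃ e', y = Sum.inl e' ∧ a e = a' e' := by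
  cases y with
  | inl e' =>
    refine ⟨e', rfl, ?_⟩
    by_contra hne
    simp [kbPad, hne] at h
  | inr d => simp [kbPad] at h

lemma sum_kbPad_le {A E E' D D' : Type*} [Fintype A] [DecidableEq A]
    [Fintype E] [Fintype E'] [DecidableEq E] [DecidableEq E'] [Fintype D] [Fintype D']
    (a : E → A) (a' : E' → A) (β : (E ⊕ D) ≃ (E' ⊕ D')) :
    ∑ x, kbPad a a' x (β x) ≤
      ∑ ε : A, min (Finset.univ.filter fun e => a e = ε).card
        (Finset.univ.filter fun e' => a' e' = ε).card := by
  classical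
  rw [Fintype.sum_sum_type]
  have h2 : ∑ d : D, kbPad a a' (Sum.inr d) (β (Sum.inr d)) = 0 := by
    apply Finset.sum_eq_zero
    intro d _
    cases β (Sum.inr d) <;> rfl
  rw [h2, add_zero]
  rw [← Finset.sum_fiberwise univ a (fun e => kbPad a a' (Sum.inl e : E ⊕ D) (β (Sum.inl e)))]
  apply Finset.sum_le_sum
  intro ε _
  set L := (univ.filter fun e => a e = ε) with hL
  set T := L.filter (fun e => kbPad a a' (Sum.inl e : E ⊕ D) (β (Sum.inl e)) = 1) with hT
  have hsum : ∑ e ∈ L, kbPad a a' (Sum.inl e : E ⊕ D) (β (Sum.inl e)) = T.card := by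
    rw [← Finset.sum_filter_add_sum_filter_not L
      (fun e => kbPad a a' (Sum.inl e : E ⊕ D) (β (Sum.inl e)) = 1)]
    have hz : ∑ e ∈ L.filter (fun e => ¬ kbPad a a' (Sum.inl e : E ⊕ D) (β (Sum.inl e)) = 1),
        kbPad a a' (Sum.inl e : E ⊕ D) (β (Sum.inl e)) = 0 := by
      apply Finset.sum_eq_zero
      intro e he
      have := (Finset.mem_filter.1 he).2
      have hle := kbPad_le_one a a' (Sum.inl e : E ⊕ D) (β (Sum.inl e))
      omega
    rw [hz, add_zero, ← hT, Finset.sum_congr rfl (fun e he => (Finset.mem_filter.1 he).2),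
      Finset.sum_const, smul_eq_mul, mul_one]
  rw [hsum]
  apply le_min
  · exact le_trans (Finset.card_le_card (Finset.filter_subset _ _)) (le_of_eq rfl)
  · have hmap : ∀ e ∈ T, β (Sum.inl e) ∈
        ((univ.filter fun e' => a' e' = ε).image Sum.inl : Finset (E' ⊕ D')) := by
      intro e he
      rw [hT, Finset.mem_filter, hL, Finset.mem_filter] at he
      obtain ⟨⟨_, hae⟩, hkb⟩ := he
      obtain ⟨e', hy, haa⟩ := kbPad_eq_one hkb
      rw [hy]
      exact Finset.mem_image_of_mem _ (Finset.mem_filter.2 ⟨Finset.mem_univ _, by rw [← haa, hae]⟩)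
    have hinj : Set.InjOn (fun e => β (Sum.inl e)) T := by
      intro e1 _ e2 _ h
      exact Sum.inl_injective (β.injective h)
    calc T.card ≤ ((univ.filter fun e' => a' e' = ε).image Sum.inl).card :=
          Finset.card_le_card_of_injOn _ hmap hinj
      _ = (univ.filter fun e' => a' e' = ε).card :=
          Finset.card_image_of_injective _ Sum.inl_injective

end UB

/-- The optimal assignment value for the 0/1 strong base kernel given by a
`refined edge address` equals `∑_ε min (|E_ε|) (|E'_ε|)`: padding the smaller
set with dummies, the maximum over all bijections of `∑ e, k_b (e, β e)` is
attained and equals the sum of the minima of the fiber cardinalities. -/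
theorem stmt_15 {A E E' : Type*} [Fintype A] [DecidableEq A]
    [Fintype E] [Fintype E'] [DecidableEq E] [DecidableEq E']
    (a : E → A) (a' : E' → A) :
    IsGreatest
      {s : ℕ | ∃ β : (E ⊕ Fin (max (Fintype.card E) (Fintype.card E') - Fintype.card E)) ≃
          (E' ⊕ Fin (max (Fintype.card E) (Fintype.card E') - Fintype.card E')),
        s = ∑ e, kbPad a a' e (β e)}
      (∑ ε : A, min (Finset.univ.filter fun e => a e = ε).card
        (Finset.univ.filter fun e' => a' e' = ε).card) := by
  classical
  have hc : Fintype.card (E ⊕ Fin (max (Fintype.card E) (Fintype.card E') - Fintype.card E)) = Fintype.card (E' ⊕ Fin (max (Fintype.card E) (Fintype.card E') - Fintype.card E')) := by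
    simp only [Fintype.card_sum, Fintype.card_fin]
    omega
  constructor
  · -- membership
    rcases isEmpty_or_nonempty E' with hE' | hE'
    · refine ⟨Fintype.equivOfCardEq hc, ?_⟩
      have h1 : ∀ ε : A, (univ.filter fun e' => a' e' = ε) = (∅ : Finset E') := by
        intro ε; exact Finset.eq_empty_of_isEmpty _
      have h0 : ∀ x : E ⊕ Fin (max (Fintype.card E) (Fintype.card E') - Fintype.card E), ∀ y : E' ⊕ Fin (max (Fintype.card E) (Fintype.card E') - Fintype.card E'), kbPad a a' x y = 0 := by
        intro x y
        cases x with
        | inr d => cases y <;> rfl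
        | inl e =>
          cases y with
          | inl e' => exact (hE'.false e').elim
          | inr d' => rfl
      simp [h1, h0]
    · inhabit E'
      set o : E → ℕ := fun e => ((Fintype.equivFin E) e : ℕ) with ho_def
      have ho : Function.Injective o := fun x y h =>
        (Fintype.equivFin E).injective (Fin.val_injective h)
      set o' : E' → ℕ := fun e => ((Fintype.equivFin E') e : ℕ) with ho'_def
      have ho' : Function.Injective o' := fun x y h =>
        (Fintype.equivFin E').injective (Fin.val_injective h)
      set pick : E → E' := fun e =>
        if h : ∃ e', a' e' = a e ∧ fiberIdx o' a' e' = fiberIdx o a e then h.choose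
        else default with hpick
      set s : Finset E := univ.filter fun e =>
        fiberIdx o a e < min (univ.filter fun x => a x = a e).card
          (univ.filter fun x => a' x = a e).card with hs
      have hkey : ∀ e ∈ s, a' (pick e) = a e ∧ fiberIdx o' a' (pick e) = fiberIdx o a e := by
        intro e he
        rw [hs, Finset.mem_filter] at he
        have hex : ∃ e', a' e' = a e ∧ fiberIdx o' a' e' = fiberIdx o a e :=
          fiberIdx_surj ho' a' (a e) (lt_of_lt_of_le he.2 (min_le_right _ _))
        rw [hpick]
        simp only [hex, dif_pos]
        exact hex.choose_spec
      have hinjOn : Set.InjOn pick s := by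
        intro e1 h1 e2 h2 h
        rw [Finset.mem_coe] at h1 h2
        obtain ⟨ha1, hi1⟩ := hkey e1 h1
        obtain ⟨ha2, hi2⟩ := hkey e2 h2
        have haa : a e1 = a e2 := by rw [← ha1, h, ha2]
        apply fiberIdx_injOn ho a haa
        rw [← hi1, h, hi2]
      have hscard : s.card = ∑ ε : A, min (univ.filter fun e => a e = ε).card
          (univ.filter fun e' => a' e' = ε).card := by
        rw [Finset.card_eq_sum_card_fiberwise (fun e _ => Finset.mem_univ (a e))]
        apply Finset.sum_congr rfl
        intro ε _
        have hfe : s.filter (fun e => a e = ε) = (univ.filter fun e => a e = ε).filter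
            (fun e => fiberIdx o a e < min (univ.filter fun x => a x = ε).card
              (univ.filter fun x => a' x = ε).card) := by
          ext e
          simp only [hs, Finset.mem_filter, Finset.mem_univ, true_and]
          constructor
          · rintro ⟨hlt, rfl⟩; exact ⟨rfl, hlt⟩
          · rintro ⟨rfl, hlt⟩; exact ⟨hlt, rfl⟩
        rw [hfe]
        exact fiberIdx_filter_card ho a ε _ (min_le_left _ _)
      -- extend the matching to a bijection
      set F : (E ⊕ Fin (max (Fintype.card E) (Fintype.card E') - Fintype.card E)) → (E' ⊕ Fin (max (Fintype.card E) (Fintype.card E') - Fintype.card E')) := Sum.elim (fun e => Sum.inl (pick e))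
        (fun _ => Sum.inl default) with hF
      have hinjF : Set.InjOn F (s.image Sum.inl : Finset (E ⊕ Fin (max (Fintype.card E) (Fintype.card E') - Fintype.card E))) := by
        intro x hx y hy h
        rw [Finset.mem_coe, Finset.mem_image] at hx hy
        obtain ⟨e1, he1, rfl⟩ := hx
        obtain ⟨e2, he2, rfl⟩ := hy
        simp only [hF, Sum.elim_inl] at h
        exact congrArg Sum.inl (hinjOn he1 he2 (Sum.inl_injective h))
      obtain ⟨β, hβ⟩ := equiv_extend hc (s.image Sum.inl) F hinjF
      refine ⟨β, ?_⟩
      have hlow : ∑ x ∈ (s.image Sum.inl : Finset (E ⊕ Fin (max (Fintype.card E) (Fintype.card E') - Fintype.card E))), kbPad a a' x (β x)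
          = s.card := by
        rw [Finset.sum_image (fun x _ y _ h => Sum.inl_injective h)]
        rw [Finset.sum_congr rfl (fun e he => ?_), Finset.sum_const, smul_eq_mul, mul_one]
        rw [hβ _ (Finset.mem_image_of_mem _ he)]
        simp only [hF, Sum.elim_inl]
        have := (hkey e he).1
        simp [kbPad, this]
      have hle1 : s.card ≤ ∑ x, kbPad a a' x (β x) := by
        rw [← hlow]
        exact Finset.sum_le_sum_of_subset (Finset.subset_univ _)
      have hle2 := sum_kbPad_le a a' β
      omega
  · -- upper bound
    rintro n ⟨β, rfl⟩
    exact sum_kbPad_le a a' β
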